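/- With G*_U as above: for every α ∈ λ, the element x_α + y + z_α is divisible by p₅^n in G*_U for all n ∈ ℕ if and only if α ∈ U. -/
import Mathlib


/-- The basis vector `x_α` of the ambient ℚ-vector space. -/
noncomputable def xx {ι : Type*} (α : ι) : (ι ⊕ Unit ⊕ ι) →₀ ℚ :=
  Finsupp.single (Sum.inl α) 1

/-- The basis vector `y` of the ambient ℚ-vector space. -/
noncomputable def yy (ι : Type*) : (ι ⊕ Unit ⊕ ι) →₀ ℚ :=
  Finsupp.single (Sum.inr (Sum.inl ())) 1

/-- The basis vector `z_α` of the ambient ℚ-vector space. -/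
noncomputable def zz {ι : Type*} (α : ι) : (ι ⊕ Unit ⊕ ι) →₀ ℚ :=
  Finsupp.single (Sum.inr (Sum.inr α)) 1

/-- The group `G*_U` of the construction. -/
noncomputable def Gstar {ι : Type*} (p₁ p₂ p₃ p₄ p₅ : ℕ) (U : Set ι) :
    AddSubgroup ((ι ⊕ Unit ⊕ ι) →₀ ℚ) :=
  AddSubgroup.closure
    ({v | ∃ (α : ι) (n : ℕ), v = ((p₁ : ℚ) ^ n)⁻¹ • xx α} ∪
     {v | ∃ n : ℕ, v = ((p₂ : ℚ) ^ n)⁻¹ • yy ι} ∪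
     {v | ∃ (α : ι) (n : ℕ), v = ((p₃ : ℚ) ^ n)⁻¹ • zz α} ∪
     {v | ∃ α ∈ U, ∃ n : ℕ, v = ((p₄ : ℚ) ^ n)⁻¹ • (xx α + zz α)} ∪
     {v | ∃ α ∈ U, ∃ n : ℕ, v = ((p₅ : ℚ) ^ n)⁻¹ • (xx α + yy ι + zz α)})

/-- The subgroup ℤ[1/p] of ℚ. -/
def pA (p : ℕ) : AddSubgroup ℚ where
  carrier := {q | ∃ (m : ℕ) (k : ℤ), q * (p : ℚ) ^ m = k}
  zero_mem' := ⟨0, 0, by simp⟩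
  add_mem' := by
    rintro a b ⟨m, k, hk⟩ ⟨m', k', hk'⟩
    refine ⟨m + m', k * p ^ m' + k' * p ^ m, ?_⟩
    push_cast
    rw [pow_add, ← hk, ← hk']
    ring
  neg_mem' := by
    rintro a ⟨m, k, hk⟩
    exact ⟨m, -k, by push_cast; linarith⟩

theorem stmt_11 {ι : Type*} (p₁ p₂ p₃ p₄ p₅ : ℕ)
    (hp : ∀ p ∈ [p₁, p₂, p₃, p₄, p₅], p.Prime)
    (hne : [p₁, p₂, p₃, p₄, p₅].Pairwise (· ≠ ·)) (U : Set ι) (α : ι) :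
    (∀ n : ℕ, ∃ h ∈ Gstar p₁ p₂ p₃ p₄ p₅ U,
      xx α + yy ι + zz α = ((p₅ : ℤ) ^ n) • h) ↔ α ∈ U := by
  have hp1 : p₁.Prime := hp p₁ (by simp)
  have hp5 : p₅.Prime := hp p₅ (by simp)
  have h15 : p₁ ≠ p₅ := by
    simp only [List.pairwise_cons] at hne
    exact hne.1 p₅ (by simp)
  have hp1q : (p₁ : ℚ) ≠ 0 := by exact_mod_cast hp1.ne_zero
  have hp5q : (p₅ : ℚ) ≠ 0 := by exact_mod_cast hp5.ne_zero
  constructor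
  · intro hdiv
    by_contra hU
    obtain ⟨h, hG, heq⟩ := hdiv 1
    set c : ((ι ⊕ Unit ⊕ ι) →₀ ℚ) →+ ℚ := Finsupp.applyAddHom (Sum.inl α) with hc
    have hle : Gstar p₁ p₂ p₃ p₄ p₅ U ≤ (pA p₁).comap c := by
      rw [Gstar]
      refine (AddSubgroup.closure_le _).mpr ?_
      rintro v hv
      simp only [Set.mem_union, Set.mem_setOf_eq] at hv
      rcases hv with ((((⟨β, n, rfl⟩ | ⟨n, rfl⟩) | ⟨β, n, rfl⟩) | ⟨β, hβ, n, rfl⟩) |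
        ⟨β, hβ, n, rfl⟩)
      · simp only [SetLike.mem_coe, AddSubgroup.mem_comap, hc, Finsupp.applyAddHom_apply,
          Finsupp.smul_apply, xx, Finsupp.single_apply, smul_eq_mul]
        by_cases hβα : β = α
        · subst hβα
          refine ⟨n, 1, ?_⟩
          simp [inv_mul_cancel₀ (pow_ne_zero n hp1q)]
        · refine ⟨0, 0, ?_⟩
          simp [hβα]
      · simp only [SetLike.mem_coe, AddSubgroup.mem_comap, hc, Finsupp.applyAddHom_apply,
          Finsupp.smul_apply, yy, Finsupp.single_apply, smul_eq_mul]
        exact ⟨0, 0, by simp⟩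
      · simp only [SetLike.mem_coe, AddSubgroup.mem_comap, hc, Finsupp.applyAddHom_apply,
          Finsupp.smul_apply, zz, Finsupp.single_apply, smul_eq_mul]
        exact ⟨0, 0, by simp⟩
      · have hβα : β ≠ α := fun h => hU (h ▸ hβ)
        simp only [SetLike.mem_coe, AddSubgroup.mem_comap, hc, Finsupp.applyAddHom_apply,
          Finsupp.smul_apply, Finsupp.add_apply, xx, zz, Finsupp.single_apply, smul_eq_mul]
        exact ⟨0, 0, by simp [hβα]⟩
      · have hβα : β ≠ α := fun h => hU (h ▸ hβ)
        simp only [SetLike.mem_coe, AddSubgroup.mem_comap, hc, Finsupp.applyAddHom_apply,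
          Finsupp.smul_apply, Finsupp.add_apply, xx, yy, zz, Finsupp.single_apply, smul_eq_mul]
        exact ⟨0, 0, by simp [hβα]⟩
    have hch : c h ∈ pA p₁ := hle hG
    have hval : (1 : ℚ) = (p₅ : ℚ) * c h := by
      have := congrArg (fun v => c v) heq
      simpa [hc, xx, yy, zz, Finsupp.single_apply, mul_comm] using this
    obtain ⟨m, k, hk⟩ := hch
    have hch' : c h = (p₅ : ℚ)⁻¹ := by field_simp at hval ⊢; linarith
    rw [hch'] at hk
    have hQ : ((p₁ : ℚ)) ^ m = (k : ℚ) * p₅ := by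
      field_simp at hk
      linarith
    have hZ : (p₁ : ℤ) ^ m = k * p₅ := by exact_mod_cast hQ
    have hdvd : (p₅ : ℤ) ∣ (p₁ : ℤ) ^ m := ⟨k, by linarith⟩
    have hdvdN : p₅ ∣ p₁ ^ m := by exact_mod_cast hdvd
    have : p₅ ∣ p₁ := hp5.dvd_of_dvd_pow hdvdN
    exact h15 ((Nat.prime_dvd_prime_iff_eq hp5 hp1).mp this).symm
  · intro hU n
    refine ⟨((p₅ : ℚ) ^ n)⁻¹ • (xx α + yy ι + zz α), ?_, ?_⟩
    · exact AddSubgroup.subset_closure (Or.inr ⟨α, hU, n, rfl⟩)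
    · rw [← Int.cast_smul_eq_zsmul ℚ, smul_smul]
      push_cast
      rw [mul_inv_cancel₀ (pow_ne_zero n hp5q), one_smul]
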